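/- There exist a game structure, a valuation distribution, and an inclusion-rule-respecting subgame perfect equilibrium of the FPA-EQ mechanism whose expected welfare is exactly (1 − 1/e) times the expected maximum welfare. Specifically: with three users, one block producer, block size 1, valuations (1, x, x) where x has CDF F(x) = (1/e)·1/(1−x) on [0, 1 − 1/e], the profile where user 1 bids 0, users 2 and 3 bid truthfully, and the block producer includes the highest bid (ties favoring user 1) is an equilibrium with expected welfare 1 − 1/e, while the maximum welfare is 1. -/

import Mathlib

open MeasureTheory Real

set_option maxHeartbeats 1000000

private lemma fpaeq_e_facts : 0 < (Real.exp 1)⁻¹ ∧ (Real.exp 1)⁻¹ < 1 := by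
  have h1 : (1:ℝ) < Real.exp 1 := by
    have := Real.exp_one_gt_d9; linarith
  constructor
  · positivity
  · rw [inv_lt_one_iff₀]; right; exact h1

/-- The winning-set identity for the welfare integrand. -/
private lemma fpaeq_set_eq (t : ℝ) (ht0 : 0 < t) (ht1 : t < 1) :
    {a : ℝ | t < (if 0 < a then a else 1)} = Set.Iic 0 ∪ Set.Ioi t := by
  ext a
  simp only [Set.mem_setOf_eq, Set.mem_union, Set.mem_Iic, Set.mem_Ioi]
  by_cases h : 0 < a
  · simp only [if_pos h]
    constructor
    · intro h'; right; exact h'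
    · rintro (h' | h')
      · linarith
      · exact h'
  · simp only [if_neg h]
    constructor
    · intro _; left; linarith
    · intro _; exact ht1

private lemma fpaeq_Ioi_zero (μ : Measure ℝ) [IsProbabilityMeasure μ]
    (hsupp : μ (Set.Icc 0 (1 - (Real.exp 1)⁻¹)) = 1)
    {t : ℝ} (ht : 1 - (Real.exp 1)⁻¹ ≤ t) : μ (Set.Ioi t) = 0 := by
  have hc : μ (Set.Icc 0 (1 - (Real.exp 1)⁻¹))ᶜ = 0 := by
    have := measure_compl (μ := μ) (s := Set.Icc 0 (1 - (Real.exp 1)⁻¹))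
      measurableSet_Icc (measure_ne_top μ _)
    rw [hsupp, measure_univ] at this
    simpa using this
  refine measure_mono_null ?_ hc
  intro a ha
  simp only [Set.mem_Ioi] at ha
  simp only [Set.mem_compl_iff, Set.mem_Icc, not_and, not_le]
  intro _
  linarith

private lemma fpaeq_Ioi (μ : Measure ℝ) [IsProbabilityMeasure μ]
    (hsupp : μ (Set.Icc 0 (1 - (Real.exp 1)⁻¹)) = 1)
    (hcdf : ∀ y ∈ Set.Ico (0:ℝ) (1 - (Real.exp 1)⁻¹),
      μ (Set.Iic y) = ENNReal.ofReal ((Real.exp 1)⁻¹ / (1 - y)))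
    {t : ℝ} (ht0 : 0 ≤ t) (htc : t ≤ 1 - (Real.exp 1)⁻¹) :
    μ (Set.Ioi t) = ENNReal.ofReal (1 - (Real.exp 1)⁻¹ / (1 - t)) := by
  obtain ⟨he0, he1⟩ := fpaeq_e_facts
  rcases eq_or_lt_of_le htc with h | h
  · rw [fpaeq_Ioi_zero μ hsupp h.ge]
    have h1t : 1 - t = (Real.exp 1)⁻¹ := by rw [h]; ring
    obtain ⟨he0, _⟩ := fpaeq_e_facts
    rw [h1t, div_self he0.ne']; simp
  · have hIic := hcdf t ⟨ht0, h⟩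
    have h1t : 0 < 1 - t := by linarith
    have hle : (Real.exp 1)⁻¹ / (1 - t) ≤ 1 := by
      rw [div_le_one h1t]; linarith
    have hcompl : Set.Ioi t = (Set.Iic t)ᶜ := by
      ext a; simp [not_le]
    rw [hcompl, measure_compl measurableSet_Iic (measure_ne_top μ _),
      measure_univ, hIic]
    rw [← ENNReal.ofReal_one, ← ENNReal.ofReal_sub _ (by positivity)]

/-- The expected welfare computation. -/
private lemma fpaeq_welfare (μ : Measure ℝ) [IsProbabilityMeasure μ]
    (hsupp : μ (Set.Icc 0 (1 - (Real.exp 1)⁻¹)) = 1)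
    (hcdf : ∀ y ∈ Set.Ico (0:ℝ) (1 - (Real.exp 1)⁻¹),
      μ (Set.Iic y) = ENNReal.ofReal ((Real.exp 1)⁻¹ / (1 - y))) :
    ∫ x, (if 0 < x then x else 1) ∂μ = 1 - (Real.exp 1)⁻¹ := by
  obtain ⟨he0, he1⟩ := fpaeq_e_facts
  set c : ℝ := 1 - (Real.exp 1)⁻¹ with hc_def
  have hc0 : 0 < c := by simp only [hc_def]; linarith
  have hc1 : c < 1 := by simp only [hc_def]; linarith
  set f : ℝ → ℝ := fun x => if 0 < x then x else 1 with hf_def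
  have hf_meas : Measurable f :=
    Measurable.ite (measurableSet_lt measurable_const measurable_id) measurable_id
      measurable_const
  have hf_nn : ∀ x, 0 ≤ f x := by
    intro x; simp only [hf_def]; split <;> linarith
  -- a.e. membership in the support
  have hae : ∀ᵐ x ∂μ, x ∈ Set.Icc 0 c := by
    rw [ae_iff]
    have h := measure_compl (μ := μ) (s := Set.Icc 0 c) measurableSet_Icc
      (measure_ne_top μ _)
    rw [hsupp, measure_univ] at h
    simp only [tsub_self] at h
    have heq : {x : ℝ | ¬ x ∈ Set.Icc 0 c} = (Set.Icc 0 c)ᶜ := rfl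
    rw [heq, h]
  have hf_bdd : ∀ᵐ x ∂μ, ‖f x‖ ≤ 1 := by
    filter_upwards [hae] with x hx
    rw [Real.norm_eq_abs, abs_of_nonneg (hf_nn x)]
    simp only [hf_def]
    split
    · rcases hx with ⟨_, hx2⟩; linarith
    · exact le_refl 1
  have hf_int : Integrable f μ :=
    Integrable.mono' (integrable_const 1) hf_meas.aestronglyMeasurable hf_bdd
  rw [hf_int.integral_eq_integral_meas_lt (Filter.Eventually.of_forall hf_nn)]
  set g : ℝ → ℝ := fun t => (μ {a : ℝ | t < f a}).toReal with hg_def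
  have hg_meas : Measurable g := by
    apply Measurable.ennreal_toReal
    apply Antitone.measurable
    intro s t hst
    exact measure_mono (fun a ha => lt_of_le_of_lt hst ha)
  have hg_nn : ∀ t, 0 ≤ g t := fun t => ENNReal.toReal_nonneg
  have hg_le1 : ∀ t, g t ≤ 1 := by
    intro t
    have h1 : μ {a : ℝ | t < f a} ≤ 1 := prob_le_one
    have := ENNReal.toReal_mono (by norm_num) h1
    simpa using this
  -- restrict the integral to (0, 1]
  have hstep1 : ∫ t in Set.Ioi (0:ℝ), g t = ∫ t in Set.Ioc (0:ℝ) 1, g t := by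
    apply setIntegral_eq_of_subset_of_ae_diff_eq_zero nullMeasurableSet_Ioi
      Set.Ioc_subset_Ioi_self
    apply Filter.Eventually.of_forall
    intro t ht
    simp only [Set.mem_diff, Set.mem_Ioi, Set.mem_Ioc, not_and, not_le] at ht
    have ht1 : 1 < t := ht.2 ht.1
    simp only [hg_def]
    have : μ {a : ℝ | t < f a} = 0 := by
      refine measure_mono_null ?_ (fpaeq_Ioi_zero μ hsupp (t := t) (by linarith))
      intro a ha
      simp only [Set.mem_setOf_eq, hf_def] at ha
      simp only [Set.mem_Ioi]
      by_cases h : 0 < a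
      · rw [if_pos h] at ha; exact ha
      · rw [if_neg h] at ha; linarith
    rw [this]; simp
  change ∫ t in Set.Ioi (0:ℝ), g t = c
  rw [hstep1]
  -- split at c
  have hsplit : Set.Ioc (0:ℝ) 1 = Set.Ioc 0 c ∪ Set.Ioc c 1 :=
    (Set.Ioc_union_Ioc_eq_Ioc hc0.le hc1.le).symm
  have hint1 : IntegrableOn g (Set.Ioc (0:ℝ) c) volume := by
    apply Measure.integrableOn_of_bounded (M := 1) measure_Ioc_lt_top.ne
      hg_meas.aestronglyMeasurable
    apply Filter.Eventually.of_forall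
    intro t
    rw [Real.norm_eq_abs, abs_of_nonneg (hg_nn t)]
    exact hg_le1 t
  have hint2 : IntegrableOn g (Set.Ioc c (1:ℝ)) volume := by
    apply Measure.integrableOn_of_bounded (M := 1) measure_Ioc_lt_top.ne
      hg_meas.aestronglyMeasurable
    apply Filter.Eventually.of_forall
    intro t
    rw [Real.norm_eq_abs, abs_of_nonneg (hg_nn t)]
    exact hg_le1 t
  rw [hsplit, setIntegral_union (Set.Ioc_disjoint_Ioc_of_le le_rfl) measurableSet_Ioc hint1 hint2]
  -- first piece
  have hg1 : ∀ t ∈ Set.Ioc (0:ℝ) c, g t = (Real.exp 1)⁻¹ + (1 - (Real.exp 1)⁻¹ * (1 - t)⁻¹) := by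
    intro t ⟨ht0, htc⟩
    have ht1 : t < 1 := lt_of_le_of_lt htc hc1
    simp only [hg_def, hf_def]
    rw [fpaeq_set_eq t ht0 ht1,
      measure_union (by
        rw [Set.disjoint_left]; intro a ha ha'
        simp only [Set.mem_Iic] at ha
        simp only [Set.mem_Ioi] at ha'
        linarith) measurableSet_Ioi]
    have hIic0 : μ (Set.Iic 0) = ENNReal.ofReal ((Real.exp 1)⁻¹) := by
      have := hcdf 0 ⟨le_refl 0, hc0⟩
      simpa using this
    rw [hIic0, fpaeq_Ioi μ hsupp hcdf ht0.le htc]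
    have h1t : 0 < 1 - t := by linarith
    have hle : (Real.exp 1)⁻¹ / (1 - t) ≤ 1 := by
      rw [div_le_one h1t]
      simp only [hc_def] at htc; linarith
    rw [ENNReal.toReal_add ENNReal.ofReal_ne_top ENNReal.ofReal_ne_top,
      ENNReal.toReal_ofReal he0.le, ENNReal.toReal_ofReal (by linarith)]
    rw [div_eq_mul_inv]
  have hI1 : ∫ t in Set.Ioc (0:ℝ) c, g t
      = ∫ t in Set.Ioc (0:ℝ) c, ((Real.exp 1)⁻¹ + (1 - (Real.exp 1)⁻¹ * (1 - t)⁻¹)) := by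
    apply setIntegral_congr_fun measurableSet_Ioc
    exact hg1
  -- second piece
  have hg2 : ∀ᵐ t ∂(volume : Measure ℝ), t ∈ Set.Ioc c 1 → g t = (Real.exp 1)⁻¹ := by
    have h1 : ∀ᵐ t ∂(volume : Measure ℝ), t ≠ 1 := by
      rw [ae_iff]
      simpa using volume_singleton (a := (1:ℝ))
    filter_upwards [h1] with t ht1 ⟨htc, hle1⟩
    have ht1' : t < 1 := lt_of_le_of_ne hle1 ht1
    simp only [hg_def, hf_def]
    rw [fpaeq_set_eq t (lt_trans hc0 htc) ht1',
      measure_union (by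
        rw [Set.disjoint_left]; intro a ha ha'
        simp only [Set.mem_Iic] at ha
        simp only [Set.mem_Ioi] at ha'
        have : (0:ℝ) < t := lt_trans hc0 htc
        linarith) measurableSet_Ioi]
    have hIic0 : μ (Set.Iic 0) = ENNReal.ofReal ((Real.exp 1)⁻¹) := by
      have := hcdf 0 ⟨le_refl 0, hc0⟩
      simpa using this
    rw [hIic0, fpaeq_Ioi_zero μ hsupp htc.le, add_zero, ENNReal.toReal_ofReal he0.le]
  have hI2 : ∫ t in Set.Ioc c (1:ℝ), g t = (Real.exp 1)⁻¹ * (Real.exp 1)⁻¹ := by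
    rw [setIntegral_congr_ae measurableSet_Ioc hg2]
    rw [setIntegral_const]
    rw [measureReal_def, Real.volume_Ioc, smul_eq_mul]
    rw [ENNReal.toReal_ofReal (by linarith)]
    simp only [hc_def]; ring
  rw [hI1, hI2]
  -- compute the explicit integral
  have hiv : ∫ t in Set.Ioc (0:ℝ) c, ((Real.exp 1)⁻¹ + (1 - (Real.exp 1)⁻¹ * (1 - t)⁻¹))
      = ∫ t in (0:ℝ)..c, ((Real.exp 1)⁻¹ + (1 - (Real.exp 1)⁻¹ * (1 - t)⁻¹)) := by
    rw [intervalIntegral.integral_of_le hc0.le]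
  rw [hiv]
  have hcont : ContinuousOn (fun t : ℝ => (1 - t)⁻¹) (Set.uIcc 0 c) := by
    apply ContinuousOn.inv₀
    · exact (continuous_const.sub continuous_id).continuousOn
    · intro t ht
      rw [Set.uIcc_of_le hc0.le] at ht
      rcases ht with ⟨_, ht2⟩
      intro h
      have : t = 1 := by linarith
      linarith [lt_of_le_of_lt ht2 hc1]
  have hii : IntervalIntegrable (fun t : ℝ => (1 - t)⁻¹) volume 0 c :=
    hcont.intervalIntegrable
  have hlog : ∫ t in (0:ℝ)..c, (1 - t)⁻¹ = 1 := by
    have := intervalIntegral.integral_comp_sub_left (a := (0:ℝ)) (b := c)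
      (fun u : ℝ => u⁻¹) 1
    rw [this, sub_zero]
    rw [integral_inv_of_pos (by simp only [hc_def]; linarith) one_pos]
    simp only [hc_def, sub_sub_cancel]
    rw [one_div, inv_inv, Real.log_exp]
  have hmain : ∫ t in (0:ℝ)..c, ((Real.exp 1)⁻¹ + (1 - (Real.exp 1)⁻¹ * (1 - t)⁻¹))
      = ((Real.exp 1)⁻¹ + 1) * c - (Real.exp 1)⁻¹ := by
    have h1 : (fun t : ℝ => (Real.exp 1)⁻¹ + (1 - (Real.exp 1)⁻¹ * (1 - t)⁻¹))
        = fun t : ℝ => ((Real.exp 1)⁻¹ + 1) - (Real.exp 1)⁻¹ * (1 - t)⁻¹ := by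
      funext t; ring
    rw [h1]
    rw [intervalIntegral.integral_sub intervalIntegrable_const (hii.const_mul _)]
    rw [intervalIntegral.integral_const, intervalIntegral.integral_const_mul, hlog]
    simp only [smul_eq_mul, sub_zero, mul_one]
    ring
  rw [hmain]
  simp only [hc_def]
  ring

/-- Tightness of the 1 − 1/e bound for FPA-EQ. -/
theorem fpaeq_tightness (μ : Measure ℝ) [IsProbabilityMeasure μ]
    (hsupp : μ (Set.Icc 0 (1 - (Real.exp 1)⁻¹)) = 1)
    (hcdf : ∀ y ∈ Set.Ico (0:ℝ) (1 - (Real.exp 1)⁻¹),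
      μ (Set.Iic y) = ENNReal.ofReal ((Real.exp 1)⁻¹ / (1 - y))) :
    -- the maximum-possible welfare is 1 with probability 1
    (∀ x ∈ Set.Icc (0:ℝ) (1 - (Real.exp 1)⁻¹), max 1 x = 1) ∧
    -- expected welfare at the stated profile: user 1 (value 1) wins exactly when
    -- x = 0, otherwise a user of value x wins; the expectation is 1 − 1/e
    (∫ x, (if 0 < x then x else 1) ∂μ = 1 - (Real.exp 1)⁻¹) ∧
    -- user 1's equilibrium condition: deviating to any bid b₁ ≥ 0 (winning
    -- whenever x ≤ b₁, by the tie-breaking rule, and paying b₁) yields expected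
    -- utility no greater than that of bidding 0
    (∀ b₁ : ℝ, 0 ≤ b₁ →
      ∫ x, (if x ≤ b₁ then 1 - b₁ else 0) ∂μ
        ≤ ∫ x, (if x ≤ 0 then (1:ℝ) else 0) ∂μ) ∧
    -- user 2's equilibrium condition: with value x, bidding b wins iff x ≤ b and
    -- 0 < b; the resulting utility never exceeds its equilibrium utility 0
    (∀ x ∈ Set.Icc (0:ℝ) (1 - (Real.exp 1)⁻¹), ∀ b : ℝ, 0 ≤ b →
      (if x ≤ b ∧ 0 < b then x - b else 0) ≤ 0) ∧
    -- user 3's equilibrium condition: with value x, bidding b wins iff x < b;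
    -- the resulting utility never exceeds its equilibrium utility 0
    (∀ x ∈ Set.Icc (0:ℝ) (1 - (Real.exp 1)⁻¹), ∀ b : ℝ, 0 ≤ b →
      (if x < b then x - b else 0) ≤ 0) := by
  obtain ⟨he0, he1⟩ := fpaeq_e_facts
  refine ⟨?_, fpaeq_welfare μ hsupp hcdf, ?_, ?_, ?_⟩
  · intro x ⟨_, hx2⟩
    exact max_eq_left (by linarith)
  · -- user 1's equilibrium condition
    intro b hb
    have hIic : ∀ d : ℝ, (fun x : ℝ => if x ≤ d then 1 - d else 0)
        = (Set.Iic d).indicator (fun _ => 1 - d) := by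
      intro d; funext x; simp [Set.indicator_apply, Set.mem_Iic]
    have hIic0 : (fun x : ℝ => if x ≤ (0:ℝ) then (1:ℝ) else 0)
        = (Set.Iic (0:ℝ)).indicator (fun _ => (1:ℝ)) := by
      funext x; simp [Set.indicator_apply, Set.mem_Iic]
    rw [hIic b, hIic0, integral_indicator_const _ measurableSet_Iic,
      integral_indicator_const _ measurableSet_Iic]
    have hμ0 : μ (Set.Iic 0) = ENNReal.ofReal ((Real.exp 1)⁻¹) := by
      have := hcdf 0 ⟨le_refl 0, by linarith⟩
      simpa using this
    simp only [measureReal_def]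
    rw [hμ0, smul_eq_mul, smul_eq_mul, mul_one, ENNReal.toReal_ofReal he0.le]
    by_cases hbc : b < 1 - (Real.exp 1)⁻¹
    · rw [hcdf b ⟨hb, hbc⟩, ENNReal.toReal_ofReal (div_nonneg he0.le (by linarith))]
      have h1b : (0:ℝ) < 1 - b := by linarith
      rw [div_mul_cancel₀ _ h1b.ne']
    · push_neg at hbc
      have hp1 : (μ (Set.Iic b)).toReal ≤ 1 := by
        have h1 : μ (Set.Iic b) ≤ 1 := prob_le_one
        have := ENNReal.toReal_mono (by norm_num) h1
        simpa using this
      have hp0 : 0 ≤ (μ (Set.Iic b)).toReal := ENNReal.toReal_nonneg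
      by_cases hb1 : b ≤ 1
      · calc (μ (Set.Iic b)).toReal * (1 - b) ≤ 1 * (1 - b) := by
              apply mul_le_mul_of_nonneg_right hp1 (by linarith)
          _ = 1 - b := one_mul _
          _ ≤ (Real.exp 1)⁻¹ := by linarith
      · push_neg at hb1
        have : (μ (Set.Iic b)).toReal * (1 - b) ≤ 0 :=
          mul_nonpos_of_nonneg_of_nonpos hp0 (by linarith)
        linarith
  · intro x ⟨hx1, _⟩ b _
    split
    · next h => linarith [h.1]
    · exact le_refl (0:ℝ)
  · intro x ⟨hx1, _⟩ b _
    split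
    · next h => linarith
    · exact le_refl (0:ℝ)
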